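/- If w is a differentiable word over {a,b} and u is a factor of w, then D(u) is a factor of D(w). -/

import Mathlib

/-- Run-length encoding Δ: the list of lengths of maximal runs. -/
def rle (w : List ℕ) : List ℕ := (w.splitBy (· == ·)).map List.length

/-- Trim the first entry if it is less than `b`. -/
def trimF (b : ℕ) : List ℕ → List ℕ
  | [] => []
  | x :: xs => if x < b then xs else x :: xs

/-- The derivative D: run lengths, dropping boundary runs shorter than `b`. -/
def derW (b : ℕ) (w : List ℕ) : List ℕ :=
  (trimF b ((trimF b (rle w)).reverse)).reverse

/-- `w` is a word over the alphabet `{a, b}`. -/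
def WordOver (a b : ℕ) (w : List ℕ) : Prop := ∀ c ∈ w, c = a ∨ c = b

/-- `w` is differentiable: all runs have length at most `b`, and all
interior runs have length exactly `a` or `b`. -/
def DiffW (a b : ℕ) (w : List ℕ) : Prop :=
  (∀ t ∈ rle w, t ≤ b) ∧ (∀ t ∈ ((rle w).drop 1).dropLast, t = a ∨ t = b)

/-- The closure ŵ: extend the first (resp. last) run to length `b`
if its length is strictly greater than `a`. -/
def clos (a b : ℕ) (w : List ℕ) : List ℕ :=
  (if a < (rle w).headD 0 then List.replicate (b - (rle w).headD 0) (w.headD 0) else [])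
    ++ w ++
  (if a < (rle w).getLastD 0 then List.replicate (b - (rle w).getLastD 0) (w.getLastD 0) else [])

/-- ρ(w) = D(ŵ). -/
def rhoW (a b : ℕ) (w : List ℕ) : List ℕ := derW b (clos a b w)

/-- `w` is a smooth (C^∞_{a,b}) word: it is a word over `{a,b}`, every iterated
closure is differentiable, and iterating ρ eventually yields the empty word. -/
def SmoothW (a b : ℕ) (w : List ℕ) : Prop :=
  WordOver a b w ∧ (∀ k : ℕ, DiffW a b (clos a b ((rhoW a b)^[k] w))) ∧
    ∃ k : ℕ, (rhoW a b)^[k] w = []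

/-- n-th power of a word (n-fold concatenation). -/
def lpow (u : List ℕ) (n : ℕ) : List ℕ := (List.replicate n u).flatten

/-- The pseudo-inverse Δ_α^{-1}: maps u₁u₂u₃⋯ to α^{u₁} β^{u₂} α^{u₃} ⋯ . -/
def dinv (α β : ℕ) : List ℕ → List ℕ
  | [] => []
  | t :: ts => List.replicate t α ++ dinv β α ts

open List



theorem loop_eq_append {α : Type*} {r : α → α → Bool} {l : List α} {a : α} {g : List α}
    (gs : List (List α)) :
    splitBy.loop r l a g gs = gs.reverse ++ splitBy.loop r l a g [] := by
  induction l generalizing a g gs with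
  | nil => simp [splitBy.loop]
  | cons b l IH =>
    simp_rw [splitBy.loop]
    split
    · rw [IH]
    · rw [IH, IH [(a :: g).reverse]]; simp

theorem loop_modifyHead {α : Type*} {r : α → α → Bool} (l : List α) (a : α) (g : List α) :
    splitBy.loop r l a g [] = modifyHead (g.reverse ++ ·) (splitBy.loop r l a [] []) := by
  induction l generalizing a g with
  | nil => simp [splitBy.loop]
  | cons d l IH =>
    simp_rw [splitBy.loop]
    split
    · rw [IH d (a::g), IH d [a]]
      cases h : splitBy.loop r l d [] [] <;> simp
    · rw [loop_eq_append, loop_eq_append [[a].reverse]]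
      cases h : splitBy.loop r l d [] [] <;> simp

theorem splitBy_cons_cons {α : Type*} (r : α → α → Bool) (c d : α) (l : List α) :
    splitBy r (c::d::l) =
      if r c d then modifyHead (c :: ·) (splitBy r (d::l)) else [c] :: splitBy r (d::l) := by
  show splitBy.loop r (d::l) c [] [] = _
  rw [splitBy.loop]
  split
  · next h => rw [h, if_pos rfl, loop_modifyHead]; rfl
  · next h => rw [h, if_neg (by simp), loop_eq_append]; rfl

theorem rle_nil : rle [] = [] := rfl

theorem rle_singleton (c : ℕ) : rle [c] = [1] := rfl

theorem rle_cons_cons (c d : ℕ) (l : List ℕ) :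
    rle (c::d::l) = if c = d then modifyHead (· + 1) (rle (d::l)) else 1 :: rle (d::l) := by
  unfold rle
  rw [splitBy_cons_cons]
  by_cases h : c = d
  · rw [if_pos (by simp [h]), if_pos h]
    cases hs : splitBy (· == ·) (d::l) <;> simp
  · rw [if_neg (by simp [h]), if_neg h]; simp

theorem rle_cons_ne_nil (c : ℕ) (l : List ℕ) : rle (c :: l) ≠ [] := by
  induction l generalizing c with
  | nil => simp [rle_singleton]
  | cons d l IH =>
    rw [rle_cons_cons]
    split
    · cases h : rle (d::l) with
      | nil => exact absurd h (IH d)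
      | cons x xs => simp
    · simp

theorem rle_pos {w : List ℕ} : ∀ t ∈ rle w, 0 < t := by
  intro t ht
  obtain ⟨g, hg, rfl⟩ := List.mem_map.1 ht
  exact List.length_pos_iff.2 (List.ne_nil_of_mem_splitBy hg)

/-- Decrement the first entry, removing it if it was 1. -/
def decHead : List ℕ → List ℕ
  | [] => []
  | h :: t => if h = 1 then t else (h - 1) :: t

theorem rle_tail (w : List ℕ) : rle w.tail = decHead (rle w) := by
  match w with
  | [] => rfl
  | [c] => rfl
  | c :: d :: l =>
    rw [List.tail_cons, rle_cons_cons]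
    by_cases h : c = d
    · rw [if_pos h]
      cases hs : rle (d::l) with
      | nil => exact absurd hs (rle_cons_ne_nil d l)
      | cons x xs =>
        have hx : 0 < x := rle_pos x (by rw [hs]; exact List.mem_cons_self)
        simp [decHead, Nat.ne_of_gt (by omega : 1 < x + 1), hx.ne']
    · rw [if_neg h]; simp [decHead]

/-- Increment the last entry. -/
def modL (r : List ℕ) : List ℕ := (List.modifyHead (· + 1) r.reverse).reverse

theorem modL_cons (h : ℕ) {t : List ℕ} (ht : t ≠ []) : modL (h :: t) = h :: modL t := by
  obtain ⟨q, x, rfl⟩ := List.eq_nil_or_concat t |>.resolve_left ht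
  simp [modL, List.modifyHead]

theorem rle_concat_ne {l : List ℕ} {c : ℕ} (h : l.getLast? ≠ some c) :
    rle (l ++ [c]) = rle l ++ [1] := by
  induction l with
  | nil => simp [rle_singleton, rle_nil]
  | cons d l IH =>
    cases l with
    | nil =>
      have hdc : d ≠ c := by simpa using h
      simp only [List.cons_append, List.nil_append, rle_cons_cons, if_neg hdc,
        rle_singleton, rle_nil]
    | cons e l =>
      have h' : (e :: l).getLast? ≠ some c := by
        rwa [List.getLast?_cons_cons] at h
      have IH' := IH h'
      rw [List.cons_append] at IH'
      simp only [List.cons_append, rle_cons_cons, IH']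
      cases he : rle (e :: l) with
      | nil => exact absurd he (rle_cons_ne_nil e l)
      | cons x xs => split <;> simp

theorem rle_concat_eq {l : List ℕ} {c : ℕ} (h : l.getLast? = some c) :
    rle (l ++ [c]) = modL (rle l) := by
  induction l with
  | nil => simp at h
  | cons d l IH =>
    cases l with
    | nil =>
      have hdc : d = c := by simpa using h
      subst hdc
      simp only [List.cons_append, List.nil_append, rle_cons_cons, if_pos rfl, rle_singleton]
      rfl
    | cons e l =>
      have h' : (e :: l).getLast? = some c := by
        rwa [List.getLast?_cons_cons] at h
      have IH' := IH h'
      rw [List.cons_append] at IH'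
      simp only [List.cons_append, rle_cons_cons, IH']
      cases he : rle (e :: l) with
      | nil => exact absurd he (rle_cons_ne_nil e l)
      | cons x xs =>
        split
        · cases xs with
          | nil => simp [modL, List.modifyHead]
          | cons y ys =>
            rw [List.modifyHead_cons, modL_cons x (by simp), List.modifyHead_cons,
              modL_cons (x+1) (by simp)]
        · rw [modL_cons 1 (by simp [he])]

theorem rle_reverse (w : List ℕ) : rle w.reverse = (rle w).reverse := by
  induction w with
  | nil => rfl
  | cons c l IH =>
    cases l with
    | nil => rfl
    | cons d l =>
      rw [List.reverse_cons, rle_cons_cons]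
      by_cases h : c = d
      · rw [if_pos h, rle_concat_eq (by simp [List.getLast?_reverse, h]), IH]
        cases he : rle (d :: l) with
        | nil => exact absurd he (rle_cons_ne_nil d l)
        | cons x xs => simp [modL]
      · rw [if_neg h, rle_concat_ne (by simp [List.getLast?_reverse]; omega), IH]
        simp

theorem trimF_cons (b x : ℕ) (xs : List ℕ) :
    trimF b (x :: xs) = if x < b then xs else x :: xs := rfl

/-- Trim the last entry if it is less than `b`. -/
def revTrim (b : ℕ) (r : List ℕ) : List ℕ := (trimF b r.reverse).reverse

theorem derW_eq (b : ℕ) (w : List ℕ) : derW b w = revTrim b (trimF b (rle w)) := rfl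

theorem trimF_cases (b : ℕ) (r : List ℕ) : trimF b r = r ∨ trimF b r = r.tail := by
  cases r with
  | nil => exact Or.inl rfl
  | cons x xs => by_cases h : x < b <;> simp [trimF_cons, h]

theorem revTrim_cons (b h : ℕ) {t : List ℕ} (ht : t ≠ []) :
    revTrim b (h :: t) = h :: revTrim b t := by
  obtain ⟨m, y, rfl⟩ := List.eq_nil_or_concat t |>.resolve_left ht
  simp only [List.concat_eq_append]
  rw [revTrim, revTrim, show (h :: (m ++ [y])).reverse = y :: (m.reverse ++ [h]) by simp,
    show (m ++ [y]).reverse = y :: m.reverse by simp, trimF_cons, trimF_cons]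
  split_ifs <;> simp

theorem revTrim_tail_suffix (b : ℕ) (r : List ℕ) : revTrim b r.tail <:+ revTrim b r := by
  cases r with
  | nil => exact List.suffix_rfl
  | cons h t =>
    rcases eq_or_ne t [] with rfl | ht
    · exact List.nil_suffix
    · rw [List.tail_cons, revTrim_cons b h ht]
      exact List.suffix_cons h _

theorem Dl_decHead {b : ℕ} (hb : 2 ≤ b) {r : List ℕ} (hr : r.headD 0 ≤ b) :
    revTrim b (trimF b (decHead r)) <:+ revTrim b (trimF b r) := by
  cases r with
  | nil => exact List.suffix_rfl
  | cons h t =>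
    have hhb : h ≤ b := by simpa using hr
    by_cases h1 : h = 1
    · subst h1
      rw [show decHead (1 :: t) = t from by simp [decHead], trimF_cons, if_pos (by omega)]
      rcases trimF_cases b t with he | he
      · rw [he]
      · rw [he]; exact revTrim_tail_suffix b t
    · rw [show decHead (h :: t) = (h - 1) :: t from by simp [decHead, h1], trimF_cons,
        if_pos (by omega)]
      by_cases hlt : h < b
      · rw [trimF_cons, if_pos hlt]
      · rw [trimF_cons, if_neg hlt]
        exact revTrim_tail_suffix b (h :: t)

theorem rle_headD_le {b : ℕ} {w : List ℕ} (hbd : ∀ t ∈ rle w, t ≤ b) :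
    (rle w).headD 0 ≤ b := by
  cases h : rle w with
  | nil => simp
  | cons x xs => simpa using hbd x (by rw [h]; exact List.mem_cons_self)

theorem derW_tail_suffix {b : ℕ} (hb : 2 ≤ b) {w : List ℕ}
    (hbd : ∀ t ∈ rle w, t ≤ b) : derW b w.tail <:+ derW b w := by
  rw [derW_eq, derW_eq, rle_tail]
  exact Dl_decHead hb (rle_headD_le hbd)

theorem rle_tail_le {b : ℕ} {w : List ℕ} (hbd : ∀ t ∈ rle w, t ≤ b) :
    ∀ t ∈ rle w.tail, t ≤ b := by
  rw [rle_tail]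
  cases h : rle w with
  | nil => simp [decHead]
  | cons x xs =>
    intro t ht
    have hx : x ≤ b := hbd x (by rw [h]; exact List.mem_cons_self)
    have hxs : ∀ t ∈ xs, t ≤ b := fun t ht => hbd t (by rw [h]; exact List.mem_cons_of_mem x ht)
    by_cases h1 : x = 1
    · exact hxs t (by simpa [decHead, h1] using ht)
    · rcases (by simpa [decHead, h1] using ht : t = x - 1 ∨ t ∈ xs) with rfl | htm
      · omega
      · exact hxs t htm

theorem derW_reverse (b : ℕ) (w : List ℕ) : derW b w.reverse = (derW b w).reverse := by
  rw [derW_eq, derW_eq, rle_reverse]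
  set r := rle w with hr
  clear_value r
  rcases r with _ | ⟨x, t⟩
  · rfl
  rcases eq_or_ne t [] with rfl | ht
  · by_cases hx : x < b <;> simp [revTrim, trimF_cons, hx, trimF]
  obtain ⟨m, y, rfl⟩ := List.eq_nil_or_concat t |>.resolve_left ht
  simp only [List.concat_eq_append]
  rw [show (x :: (m ++ [y])).reverse = y :: (m.reverse ++ [x]) by simp]
  rw [revTrim, revTrim, trimF_cons, trimF_cons]
  by_cases hy : y < b <;> by_cases hx : x < b <;>
    simp [hy, hx, trimF_cons, List.reverse_append, revTrim]

theorem der_suffix {b : ℕ} (hb : 2 ≤ b) :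
    ∀ w : List ℕ, (∀ t ∈ rle w, t ≤ b) → ∀ v, v <:+ w →
      (∀ t ∈ rle v, t ≤ b) ∧ derW b v <:+ derW b w := by
  intro w
  induction w with
  | nil =>
    intro hbd v hv
    rw [List.suffix_nil.1 hv]
    exact ⟨hbd, List.suffix_rfl⟩
  | cons c l IH =>
    intro hbd v hv
    rcases List.suffix_cons_iff.1 hv with rfl | hv'
    · exact ⟨hbd, List.suffix_rfl⟩
    · have hbdl : ∀ t ∈ rle l, t ≤ b := by
        have := rle_tail_le (w := c :: l) hbd
        simpa using this
      obtain ⟨h1, h2⟩ := IH hbdl v hv'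
      refine ⟨h1, h2.trans ?_⟩
      have := derW_tail_suffix hb (w := c :: l) hbd
      simpa using this

theorem der_prefix {b : ℕ} (hb : 2 ≤ b) {w v : List ℕ}
    (hbd : ∀ t ∈ rle w, t ≤ b) (hv : v <+: w) : derW b v <+: derW b w := by
  have hb' : ∀ t ∈ rle w.reverse, t ≤ b := by
    rw [rle_reverse]
    intro t ht
    exact hbd t (List.mem_reverse.1 ht)
  have hsuf : v.reverse <:+ w.reverse := List.reverse_suffix.2 hv
  have := (der_suffix hb w.reverse hb' v.reverse hsuf).2
  rw [derW_reverse, derW_reverse] at this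
  exact List.reverse_suffix.1 this


theorem stmt3 (a b : ℕ) (ha : 0 < a) (hab : a < b) (w u : List ℕ)
    (hw : DiffW a b w) (hwo : WordOver a b w) (hu : u <:+: w) :
    derW b u <:+: derW b w := by
  have hb : 2 ≤ b := by omega
  obtain ⟨t, htp, hts⟩ := List.infix_iff_prefix_suffix.1 hu
  obtain ⟨htb, hts'⟩ := der_suffix hb w hw.1 t hts
  have htp' : derW b u <+: derW b t := der_prefix hb htb htp
  exact List.infix_iff_prefix_suffix.2 ⟨derW b t, htp', hts'⟩
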